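/- Let X = X_1 × ⋯ × X_n be a finite product space with each X_i a finite nonempty set, θ : X → ℝ, and Z = Σ_{x∈X} exp(θ(x)). Let α ⊆ {1,…,n} be a nonempty subset of the coordinates and write x_α = (x_i)_{i∈α}. Let {γ_α(x_α)} be independent zero-mean Gumbel random variables, one for each assignment x_α ∈ Π_{i∈α} X_i. Then log Z ≥ E_γ[ max_{x∈X} { θ(x) + γ_α(x_α) } ]. -/

import Mathlib

open MeasureTheory Real ProbabilityTheory
open Set
open scoped NNReal ENNReal

lemma integral_log_mul_exp_neg :
    ∫ t in Set.Ioi (0:ℝ), Real.log t * Real.exp (-t) = -eulerMascheroniConstant := by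
  have h1 : HasDerivAt Complex.GammaIntegral
      (∫ t : ℝ in Ioi 0, (t:ℂ) ^ ((1:ℂ) - 1) * (Real.log t * Real.exp (-t))) 1 :=
    Complex.hasDerivAt_GammaIntegral (by norm_num)
  have heq : (Complex.Gamma : ℂ → ℂ) =ᶠ[nhds 1] Complex.GammaIntegral := by
    filter_upwards [IsOpen.mem_nhds (isOpen_lt continuous_const Complex.continuous_re)
      (by norm_num : (0:ℝ) < (1:ℂ).re)] with s hs
    exact Complex.Gamma_eq_integral hs
  have h2 : HasDerivAt Complex.Gamma
      (∫ t : ℝ in Ioi 0, (t:ℂ) ^ ((1:ℂ) - 1) * (Real.log t * Real.exp (-t))) 1 :=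
    h1.congr_of_eventuallyEq heq
  have h3 := h2.unique Complex.hasDerivAt_Gamma_one
  have h4 : (∫ t : ℝ in Ioi 0, (t:ℂ) ^ ((1:ℂ) - 1) * (Real.log t * Real.exp (-t)))
      = ((∫ t : ℝ in Ioi 0, Real.log t * Real.exp (-t) : ℝ) : ℂ) := by
    rw [show (∫ t : ℝ in Ioi 0, (t:ℂ) ^ ((1:ℂ) - 1) * (Real.log t * Real.exp (-t)))
        = ∫ t : ℝ in Ioi 0, ((Real.log t * Real.exp (-t) : ℝ) : ℂ) from
      setIntegral_congr_fun measurableSet_Ioi fun t ht => by simp]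
    exact integral_ofReal
  rw [h4] at h3
  exact_mod_cast h3

lemma integrableOn_log_mul_exp_neg :
    IntegrableOn (fun t => Real.log t * Real.exp (-t)) (Ioi (0:ℝ)) := by
  by_contra h
  have := MeasureTheory.integral_undef h
  rw [integral_log_mul_exp_neg] at this
  have h2 := Real.one_half_lt_eulerMascheroniConstant
  have : eulerMascheroniConstant = 0 := by linarith [this.symm]
  linarith

noncomputable def gumbelPdf (x : ℝ) : ℝ :=
  exp (-(x + eulerMascheroniConstant)) * exp (-exp (-(x + eulerMascheroniConstant)))

lemma gumbel_hasDeriv (s : Set ℝ) : ∀ x ∈ s,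
    HasDerivWithinAt (fun x : ℝ => exp (-(x + eulerMascheroniConstant)))
      (-exp (-(x + eulerMascheroniConstant))) s x := by
  intro x _
  have : HasDerivAt (fun x : ℝ => exp (-(x + eulerMascheroniConstant)))
      (exp (-(x + eulerMascheroniConstant)) * (-1)) x :=
    (((hasDerivAt_id x).add_const eulerMascheroniConstant).neg).exp
  simpa using this.hasDerivWithinAt

lemma gumbel_injOn (s : Set ℝ) :
    InjOn (fun x : ℝ => exp (-(x + eulerMascheroniConstant))) s := by
  intro a _ b _ h
  simp only [Real.exp_eq_exp] at h
  linarith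

lemma gumbel_subst (s : Set ℝ) (hs : MeasurableSet s) (g : ℝ → ℝ) :
    ∫ u in (fun x : ℝ => exp (-(x + eulerMascheroniConstant))) '' s, g u =
      ∫ x in s, exp (-(x + eulerMascheroniConstant)) * g (exp (-(x + eulerMascheroniConstant))) := by
  rw [integral_image_eq_integral_abs_deriv_smul hs (gumbel_hasDeriv s) (gumbel_injOn s) g]
  refine setIntegral_congr_fun hs fun x _ => ?_
  rw [abs_neg, abs_of_pos (exp_pos _)]
  simp [smul_eq_mul]

lemma gumbel_subst_int (s : Set ℝ) (hs : MeasurableSet s) (g : ℝ → ℝ) :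
    IntegrableOn g ((fun x : ℝ => exp (-(x + eulerMascheroniConstant))) '' s) ↔
      IntegrableOn (fun x => exp (-(x + eulerMascheroniConstant)) *
        g (exp (-(x + eulerMascheroniConstant)))) s := by
  rw [integrableOn_image_iff_integrableOn_abs_deriv_smul hs (gumbel_hasDeriv s) (gumbel_injOn s) g]
  constructor <;> intro h <;> refine h.congr_fun (fun x _ => ?_) hs <;>
    beta_reduce <;> rw [abs_neg, abs_of_pos (exp_pos _)] <;> simp [smul_eq_mul]

lemma gumbel_image_univ :
    (fun x : ℝ => exp (-(x + eulerMascheroniConstant))) '' univ = Ioi 0 := by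
  ext u
  simp only [image_univ, mem_range, mem_Ioi]
  constructor
  · rintro ⟨x, rfl⟩; exact exp_pos _
  · intro hu; exact ⟨-(Real.log u + eulerMascheroniConstant), by simp [Real.exp_log hu]⟩

lemma gumbel_image_Iic (s : ℝ) :
    (fun x : ℝ => exp (-(x + eulerMascheroniConstant))) '' Iic s =
      Ici (exp (-(s + eulerMascheroniConstant))) := by
  ext u
  simp only [mem_image, mem_Iic, mem_Ici]
  constructor
  · rintro ⟨x, hx, rfl⟩
    exact exp_le_exp.2 (by linarith)
  · intro hu
    have hu0 : 0 < u := lt_of_lt_of_le (exp_pos _) hu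
    refine ⟨-(Real.log u + eulerMascheroniConstant), ?_, by simp [Real.exp_log hu0]⟩
    have := Real.log_le_log (exp_pos _) hu
    rw [Real.log_exp] at this
    linarith

lemma exp_neg_integrableOn_Ioi' (a : ℝ) : IntegrableOn (fun x => exp (-x)) (Ioi a) := by
  simpa using exp_neg_integrableOn_Ioi a one_pos

lemma gumbelPdf_integrable : Integrable gumbelPdf := by
  rw [← integrableOn_univ, show (univ : Set ℝ) = univ from rfl]
  have := (gumbel_subst_int univ MeasurableSet.univ (fun u => exp (-u))).1
    (by rw [gumbel_image_univ]; exact exp_neg_integrableOn_Ioi' 0)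
  exact this

lemma gumbelPdf_integral_one : ∫ x, gumbelPdf x = 1 := by
  have := gumbel_subst univ MeasurableSet.univ (fun u => exp (-u))
  rw [gumbel_image_univ] at this
  rw [show (∫ x, gumbelPdf x) = ∫ x in univ, gumbelPdf x by rw [setIntegral_univ]]
  unfold gumbelPdf
  rw [← this, integral_exp_neg_Ioi_zero]

lemma gumbelPdf_cdf (s : ℝ) :
    ∫ x in Iic s, gumbelPdf x = exp (-exp (-(s + eulerMascheroniConstant))) := by
  have := gumbel_subst (Iic s) measurableSet_Iic (fun u => exp (-u))
  rw [gumbel_image_Iic] at this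
  rw [show (∫ x in Iic s, gumbelPdf x) =
      ∫ x in Iic s, exp (-(x + eulerMascheroniConstant)) *
        exp (-exp (-(x + eulerMascheroniConstant))) from rfl, ← this,
    integral_Ici_eq_integral_Ioi, integral_exp_neg_Ioi]

noncomputable def gumbelG (u : ℝ) : ℝ :=
  (-Real.log u - eulerMascheroniConstant) * exp (-u)

lemma gumbelG_integrableOn : IntegrableOn gumbelG (Ioi (0:ℝ)) := by
  have h1 : IntegrableOn (fun u => -(Real.log u * rexp (-u))) (Ioi (0:ℝ)) :=
    integrableOn_log_mul_exp_neg.neg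
  have h2 : IntegrableOn (fun u => -eulerMascheroniConstant * rexp (-u)) (Ioi (0:ℝ)) :=
    (exp_neg_integrableOn_Ioi' 0).const_mul (-eulerMascheroniConstant)
  have h3 : IntegrableOn (fun u => -(Real.log u * rexp (-u)) + -eulerMascheroniConstant * rexp (-u))
      (Ioi (0:ℝ)) := h1.add h2
  refine h3.congr_fun (fun u _ => ?_) measurableSet_Ioi
  unfold gumbelG; ring

lemma gumbelG_integral : ∫ u in Ioi (0:ℝ), gumbelG u = 0 := by
  have h1 : IntegrableOn (fun u => -(Real.log u * rexp (-u))) (Ioi (0:ℝ)) :=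
    integrableOn_log_mul_exp_neg.neg
  have h2 : IntegrableOn (fun u => -eulerMascheroniConstant * rexp (-u)) (Ioi (0:ℝ)) :=
    (exp_neg_integrableOn_Ioi' 0).const_mul (-eulerMascheroniConstant)
  have : ∫ u in Ioi (0:ℝ), gumbelG u = ∫ u in Ioi (0:ℝ),
      ((fun u => -(Real.log u * exp (-u))) u + (fun u => -eulerMascheroniConstant * exp (-u)) u) := by
    refine setIntegral_congr_fun measurableSet_Ioi fun u _ => ?_
    unfold gumbelG; ring
  rw [this, integral_add h1 h2, integral_neg, integral_log_mul_exp_neg, MeasureTheory.integral_const_mul,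
    integral_exp_neg_Ioi_zero]
  ring

lemma gumbel_key (x : ℝ) :
    exp (-(x + eulerMascheroniConstant)) * gumbelG (exp (-(x + eulerMascheroniConstant)))
      = x * gumbelPdf x := by
  unfold gumbelG gumbelPdf
  rw [Real.log_exp]
  ring

lemma gumbelPdf_id_integrable : Integrable (fun x => x * gumbelPdf x) := by
  rw [← integrableOn_univ]
  have := (gumbel_subst_int univ MeasurableSet.univ gumbelG).1
    (by rw [gumbel_image_univ]; exact gumbelG_integrableOn)
  exact this.congr_fun (fun x _ => gumbel_key x) MeasurableSet.univ

lemma gumbelPdf_mean_zero : ∫ x, x * gumbelPdf x = 0 := by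
  rw [show (∫ x, x * gumbelPdf x) = ∫ x in univ, x * gumbelPdf x by rw [setIntegral_univ]]
  rw [show (∫ x in univ, x * gumbelPdf x)
      = ∫ x in univ, exp (-(x + eulerMascheroniConstant)) *
        gumbelG (exp (-(x + eulerMascheroniConstant))) from
    (setIntegral_congr_fun MeasurableSet.univ fun x _ => (gumbel_key x).symm)]
  rw [← gumbel_subst univ MeasurableSet.univ gumbelG, gumbel_image_univ, gumbelG_integral]

lemma gumbelPdf_nonneg (x : ℝ) : 0 ≤ gumbelPdf x :=
  mul_nonneg (exp_pos _).le (exp_pos _).le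

lemma gumbelPdf_continuous : Continuous gumbelPdf := by
  unfold gumbelPdf; fun_prop

noncomputable def gumbelMeasure : Measure ℝ :=
  volume.withDensity (fun x => ENNReal.ofReal (gumbelPdf x))

lemma gumbelMeasure_eq : gumbelMeasure
    = volume.withDensity (fun x => ((fun x => (gumbelPdf x).toNNReal) x : ℝ≥0∞)) := rfl

lemma toNNReal_meas : Measurable (fun x => (gumbelPdf x).toNNReal) :=
  gumbelPdf_continuous.measurable.real_toNNReal

lemma gumbelMeasure_Iic (s : ℝ) :
    gumbelMeasure (Iic s) = ENNReal.ofReal (exp (-exp (-(s + eulerMascheroniConstant)))) := by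
  rw [gumbelMeasure, withDensity_apply _ measurableSet_Iic,
    ← ofReal_integral_eq_lintegral_ofReal gumbelPdf_integrable.integrableOn
      (Filter.Eventually.of_forall fun x => gumbelPdf_nonneg x), gumbelPdf_cdf]

instance : IsProbabilityMeasure gumbelMeasure := by
  constructor
  rw [gumbelMeasure, withDensity_apply _ MeasurableSet.univ, Measure.restrict_univ,
    ← ofReal_integral_eq_lintegral_ofReal gumbelPdf_integrable
      (Filter.Eventually.of_forall fun x => gumbelPdf_nonneg x), gumbelPdf_integral_one,
    ENNReal.ofReal_one]

lemma gumbel_integral_id : ∫ x, x ∂gumbelMeasure = 0 := by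
  rw [gumbelMeasure_eq, integral_withDensity_eq_integral_smul toNNReal_meas]
  rw [← gumbelPdf_mean_zero]
  congr 1; ext x
  rw [NNReal.smul_def, smul_eq_mul, Real.coe_toNNReal _ (gumbelPdf_nonneg x), mul_comm]

lemma gumbel_integrable_id : Integrable (fun x => x) gumbelMeasure := by
  rw [gumbelMeasure_eq, integrable_withDensity_iff_integrable_smul toNNReal_meas]
  have : (fun x : ℝ => (fun x => (gumbelPdf x).toNNReal) x • (fun x : ℝ => x) x)
      = fun x => x * gumbelPdf x := by
    ext x
    rw [NNReal.smul_def, smul_eq_mul, Real.coe_toNNReal _ (gumbelPdf_nonneg x), mul_comm]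
  rw [this]
  exact gumbelPdf_id_integrable

theorem log_partition_ge_expected_max_subset_perturbation
    {n : ℕ} (X : Fin n → Type*) [∀ i, Fintype (X i)] [∀ i, Nonempty (X i)]
    (θ : (∀ i, X i) → ℝ) (α : Finset (Fin n)) (hα : α.Nonempty)
    {Ω : Type*} [MeasurableSpace Ω] (P : Measure Ω) [IsProbabilityMeasure P]
    (γ : ((i : α) → X i) → Ω → ℝ) (hmeas : ∀ v, Measurable (γ v))
    (hindep : iIndepFun γ P)
    (hcdf : ∀ v t, P {ω | γ v ω ≤ t} =
      ENNReal.ofReal (exp (-exp (-(t + eulerMascheroniConstant))))) :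
    ∫ ω, (⨆ x : ∀ i, X i, (θ x + γ (fun i => x i) ω)) ∂P ≤
      Real.log (∑ x : ∀ i, X i, exp (θ x)) := by
  classical
  set res : (∀ i, X i) → ((i : α) → X i) := fun x i => x i with hres
  set B : ((i : α) → X i) → Finset (∀ i, X i) :=
    fun v => Finset.univ.filter (fun x => res x = v) with hB
  have hBne : ∀ v, (B v).Nonempty := by
    intro v
    refine ⟨fun i => if h : i ∈ α then v ⟨i, h⟩ else Classical.arbitrary (X i), ?_⟩
    simp only [hB, Finset.mem_filter, Finset.mem_univ, true_and]
    funext i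
    exact dif_pos i.2
  set φ : ((i : α) → X i) → ℝ := fun v => (B v).sup' (hBne v) θ with hφ
  set M : Ω → ℝ := fun ω => Finset.univ.sup' Finset.univ_nonempty (fun v => φ v + γ v ω) with hM
  have hMmeas : Measurable M := by
    have := Finset.measurable_sup' (f := fun v ω => φ v + γ v ω) Finset.univ_nonempty
      (fun v _ => measurable_const.add (hmeas v))
    convert this using 1
    funext ω
    rw [Finset.sup'_apply]
  -- pointwise equality
  have hpt : ∀ ω, (⨆ x : ∀ i, X i, (θ x + γ (fun i => x i) ω)) = M ω := by
    intro ω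
    rw [← Finset.sup'_univ_eq_ciSup]
    apply le_antisymm
    · refine Finset.sup'_le _ _ fun x _ => ?_
      have hx : x ∈ B (res x) := by simp [hB]
      have h1 : θ x ≤ φ (res x) := Finset.le_sup' _ hx
      calc θ x + γ (fun i => x i) ω = θ x + γ (res x) ω := rfl
        _ ≤ φ (res x) + γ (res x) ω := by linarith
        _ ≤ M ω := Finset.le_sup' (fun v => φ v + γ v ω) (Finset.mem_univ (res x))
    · refine Finset.sup'_le _ _ fun v _ => ?_
      obtain ⟨x0, hx0, hx0v⟩ := Finset.exists_mem_eq_sup' (hBne v) θ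
      have hres0 : res x0 = v := by simpa [hB] using hx0
      have hfv : φ v = θ x0 := hx0v
      calc φ v + γ v ω = θ x0 + γ (res x0) ω := by rw [hfv, hres0]
        _ ≤ _ := Finset.le_sup' (fun x => θ x + γ (fun i => x i) ω) (Finset.mem_univ x0)
  -- partition function over fibers
  set Zα : ℝ := ∑ v : (i : α) → X i, exp (φ v) with hZα
  have hZαpos : 0 < Zα := Finset.sum_pos (fun v _ => exp_pos _) Finset.univ_nonempty
  set a : ℝ := Real.log Zα with ha
  have hexpa : exp a = Zα := exp_log hZαpos
  -- CDF of M
  have hMcdf : ∀ t, P {ω | M ω ≤ t} =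
      ENNReal.ofReal (exp (-exp (-(t - a + eulerMascheroniConstant)))) := by
    intro t
    have hset : {ω | M ω ≤ t} = ⋂ v, γ v ⁻¹' Iic (t - φ v) := by
      ext ω
      simp only [mem_setOf_eq, hM, Finset.sup'_le_iff, Finset.mem_univ, true_implies,
        mem_iInter, mem_preimage, mem_Iic]
      exact forall_congr' fun v => by constructor <;> intro <;> linarith
    rw [hset, hindep.meas_iInter (fun v => ⟨Iic (t - φ v), measurableSet_Iic, rfl⟩)]
    have heach : ∀ v, P (γ v ⁻¹' Iic (t - φ v)) =
        ENNReal.ofReal (exp (-exp (-(t - φ v + eulerMascheroniConstant)))) :=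
      fun v => hcdf v (t - φ v)
    simp_rw [heach]
    rw [← ENNReal.ofReal_prod_of_nonneg (fun v _ => (exp_pos _).le)]
    congr 1
    rw [← Real.exp_sum]
    congr 1
    have h1 : ∀ v, exp (-(t - φ v + eulerMascheroniConstant))
        = exp (-(t + eulerMascheroniConstant)) * exp (φ v) := by
      intro v; rw [← Real.exp_add]; ring_nf
    have h2 : exp (-(t - a + eulerMascheroniConstant))
        = exp (-(t + eulerMascheroniConstant)) * Zα := by
      rw [← hexpa, ← Real.exp_add]; ring_nf
    simp_rw [h1, h2]
    rw [hZα, Finset.mul_sum, Finset.sum_neg_distrib]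
  -- identify the law of M
  have hmap : P.map M = gumbelMeasure.map (fun x => x + a) := by
    have : IsProbabilityMeasure (P.map M) := Measure.isProbabilityMeasure_map hMmeas.aemeasurable
    refine MeasureTheory.Measure.ext_of_Iic (P.map M) _ fun t => ?_
    rw [Measure.map_apply hMmeas measurableSet_Iic,
      Measure.map_apply (measurable_add_const a) measurableSet_Iic]
    have h1 : M ⁻¹' Iic t = {ω | M ω ≤ t} := rfl
    have h2 : (fun x : ℝ => x + a) ⁻¹' Iic t = Iic (t - a) := by
      ext x; simp only [mem_preimage, mem_Iic]; constructor <;> intro <;> linarith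
    rw [h1, h2, hMcdf, gumbelMeasure_Iic]
  -- expectation
  have hint : ∫ ω, M ω ∂P = a := by
    have h1 : ∫ ω, M ω ∂P = ∫ x, x ∂(P.map M) :=
      (integral_map hMmeas.aemeasurable aestronglyMeasurable_id).symm
    have h2 : ∫ x, x ∂(gumbelMeasure.map (fun x => x + a)) = ∫ x, (x + a) ∂gumbelMeasure :=
      integral_map (measurable_add_const a).aemeasurable aestronglyMeasurable_id
    rw [h1, hmap, h2, integral_add gumbel_integrable_id (integrable_const a),
      gumbel_integral_id, integral_const, probReal_univ]
    simp
  -- comparing partition functions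
  have hle : Zα ≤ ∑ x : ∀ i, X i, exp (θ x) := by
    have hfib : ∑ x : ∀ i, X i, exp (θ x) = ∑ v : (i : α) → X i, ∑ x ∈ B v, exp (θ x) := by
      rw [hB]
      exact (Finset.sum_fiberwise Finset.univ res (fun x => exp (θ x))).symm
    rw [hfib, hZα]
    refine Finset.sum_le_sum fun v _ => ?_
    obtain ⟨x0, hx0, hx0v⟩ := Finset.exists_mem_eq_sup' (hBne v) θ
    have hfv : φ v = θ x0 := hx0v
    rw [hfv]
    exact Finset.single_le_sum (fun x _ => (exp_pos (θ x)).le) hx0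
  calc ∫ ω, (⨆ x : ∀ i, X i, (θ x + γ (fun i => x i) ω)) ∂P
      = ∫ ω, M ω ∂P := integral_congr_ae (Filter.Eventually.of_forall hpt)
    _ = a := hint
    _ ≤ Real.log (∑ x : ∀ i, X i, exp (θ x)) := Real.log_le_log hZαpos hle
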